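/- Let Φ be a crystallographic root system. The semiclosed subsets of Φ (those R with both R⁺ = R ∩ Φ⁺ and R⁻ = R ∩ Φ⁻ closed) form a lattice under the weak order, with meet R ∧ S = cl(R⁺ ∪ S⁺) ⊔ (R⁻ ∩ S⁻) and join R ∨ S = (R⁺ ∩ S⁺) ⊔ cl(R⁻ ∪ S⁻), where cl(T) = ℕT ∩ Φ. -/

import Mathlib

open Pointwise

structure RootSys (V : Type*) [NormedAddCommGroup V] [InnerProductSpace ℝ V] where
  Φ : Set V
  finite : Φ.Finite
  nonzero : ∀ α ∈ Φ, α ≠ (0 : V)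
  line : ∀ α ∈ Φ, Φ ∩ {x : V | ∃ t : ℝ, x = t • α} = {α, -α}
  reflect : ∀ α ∈ Φ, ∀ β ∈ Φ, β - (2 * (inner ℝ α β : ℝ) / (inner ℝ α α : ℝ)) • α ∈ Φ

variable {V : Type*} [NormedAddCommGroup V] [InnerProductSpace ℝ V]

/-- `Φ` is crystallographic: `⟨α^∨, β⟩ ∈ ℤ` for all roots `α, β`. -/
def RootSys.IsCrystallographic (R : RootSys V) : Prop :=
  ∀ α ∈ R.Φ, ∀ β ∈ R.Φ, ∃ n : ℤ, 2 * (inner ℝ α β : ℝ) / (inner ℝ α α : ℝ) = (n : ℝ)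

/-- A subset `S ⊆ Φ` is closed if it is stable under sums of two elements staying in `Φ`. -/
def RootSys.IsClosedSubset (R : RootSys V) (S : Set V) : Prop :=
  ∀ α ∈ S, ∀ β ∈ S, α + β ∈ R.Φ → α + β ∈ S

/-- A set of roots is antisymmetric if it never contains both `α` and `-α`. -/
def IsAntisymSet (S : Set V) : Prop := ∀ α ∈ S, -α ∉ S

/-- A `Φ`-poset: an antisymmetric closed subset of `Φ`. -/
def RootSys.IsPoset (R : RootSys V) (S : Set V) : Prop :=
  S ⊆ R.Φ ∧ IsAntisymSet S ∧ R.IsClosedSubset S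

/-- Closure: roots that are nonnegative integer combinations (multiset sums) of elements of `T`. -/
def RootSys.clos (R : RootSys V) (T : Set V) : Set V :=
  {γ ∈ R.Φ | ∃ M : Multiset V, (∀ x ∈ M, x ∈ T) ∧ M.sum = γ}

/-- Nonnegative integer combinations (multiset sums) of elements of `T`. -/
def nncomb (T : Set V) : Set V :=
  {v | ∃ M : Multiset V, (∀ x ∈ M, x ∈ T) ∧ M.sum = v}

/-- A root system equipped with a generic linear functional determining positive roots. -/
structure PosRootSys (V : Type*) [NormedAddCommGroup V] [InnerProductSpace ℝ V]
    extends RootSys V where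
  f : V →ₗ[ℝ] ℝ
  generic : ∀ α ∈ Φ, f α ≠ 0

def PosRootSys.Pos (P : PosRootSys V) : Set V := {α ∈ P.Φ | 0 < P.f α}

def PosRootSys.Neg (P : PosRootSys V) : Set V := {α ∈ P.Φ | P.f α < 0}

/-- The weak order: `R ≼ S` iff `R⁺ ⊇ S⁺` and `R⁻ ⊆ S⁻`. -/
def PosRootSys.wle (P : PosRootSys V) (R S : Set V) : Prop :=
  S ∩ P.Pos ⊆ R ∩ P.Pos ∧ R ∩ P.Neg ⊆ S ∩ P.Neg

/-- `R` is semiclosed if both `R⁺` and `R⁻` are closed. -/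
def PosRootSys.SemiClosed (P : PosRootSys V) (S : Set V) : Prop :=
  S ⊆ P.Φ ∧ P.toRootSys.IsClosedSubset (S ∩ P.Pos) ∧
    P.toRootSys.IsClosedSubset (S ∩ P.Neg)

/-- Negative closure deletion. -/
def PosRootSys.ncd (P : PosRootSys V) (S : Set V) : Set V :=
  S \ {α | α ∈ S ∩ P.Neg ∧ ∃ X : Finset V, ↑X ⊆ S ∩ P.Pos ∧ α + X.sum id ∈ P.Φ \ S}

/-- Positive closure deletion. -/
def PosRootSys.pcd (P : PosRootSys V) (S : Set V) : Set V :=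
  S \ {α | α ∈ S ∩ P.Pos ∧ ∃ X : Finset V, ↑X ⊆ S ∩ P.Neg ∧ α + X.sum id ∈ P.Φ \ S}

/-- Meet formula on closed subsets. -/
def PosRootSys.wmeet (P : PosRootSys V) (R S : Set V) : Set V :=
  P.ncd (P.toRootSys.clos ((R ∪ S) ∩ P.Pos) ∪ ((R ∩ S) ∩ P.Neg))

/-- Join formula on closed subsets. -/
def PosRootSys.wjoin (P : PosRootSys V) (R S : Set V) : Set V :=
  P.pcd (((R ∩ S) ∩ P.Pos) ∪ P.toRootSys.clos ((R ∪ S) ∩ P.Neg))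

section MyAux

private lemma RootSys.neg_mem' (R : RootSys V) {α : V} (hα : α ∈ R.Φ) : -α ∈ R.Φ := by
  have h : -α ∈ ({α, -α} : Set V) := by simp
  rw [← R.line α hα] at h
  exact h.1

private lemma inner_self_pos' {x : V} (h : x ≠ 0) : 0 < (inner ℝ x x : ℝ) := by
  have h' : ‖x‖ ≠ 0 := norm_ne_zero_iff.mpr h
  rw [real_inner_self_eq_norm_sq]
  positivity

/-- If `⟪α, β⟫ > 0` and `β ≠ ±α`, then `β - α` is a root. -/
private lemma RootSys.sub_mem' (R : RootSys V) (hcr : R.IsCrystallographic) {α β : V}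
    (hα : α ∈ R.Φ) (hβ : β ∈ R.Φ) (hip : 0 < (inner ℝ α β : ℝ))
    (h1 : β ≠ α) (h2 : β ≠ -α) : β - α ∈ R.Φ := by
  obtain ⟨m, hm⟩ := hcr α hα β hβ
  obtain ⟨n, hn⟩ := hcr β hβ α hα
  have haa : (0:ℝ) < inner ℝ α α := inner_self_pos' (R.nonzero α hα)
  have hbb : (0:ℝ) < inner ℝ β β := inner_self_pos' (R.nonzero β hβ)
  have hba : (inner ℝ β α : ℝ) = inner ℝ α β := (real_inner_comm β α).symm
  have hmpos : (0:ℝ) < m := by rw [← hm]; exact div_pos (by linarith) haa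
  have hnpos : (0:ℝ) < n := by rw [← hn, hba]; exact div_pos (by linarith) hbb
  have hm1 : (1:ℤ) ≤ m := by
    have h0 : (0:ℤ) < m := by exact_mod_cast hmpos
    omega
  have hn1 : (1:ℤ) ≤ n := by
    have h0 : (0:ℤ) < n := by exact_mod_cast hnpos
    omega
  have hα0 : ‖α‖ ≠ 0 := norm_ne_zero_iff.mpr (R.nonzero α hα)
  have hnp : ‖β‖ • α ≠ ‖α‖ • β := by
    intro he
    have hβeq : β = (‖α‖⁻¹ * ‖β‖) • α := by
      rw [mul_smul, he, smul_smul, inv_mul_cancel₀ hα0, one_smul]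
    have hβmem : β ∈ R.Φ ∩ {x : V | ∃ t : ℝ, x = t • α} := ⟨hβ, ⟨_, hβeq⟩⟩
    rw [R.line α hα] at hβmem
    rcases hβmem with h | h
    · exact h1 h
    · exact h2 h
  have hcs : (inner ℝ α β : ℝ) < ‖α‖ * ‖β‖ := inner_lt_norm_mul_iff_real.mpr hnp
  have hsq : (inner ℝ α β : ℝ) * (inner ℝ α β : ℝ) < (inner ℝ α α : ℝ) * (inner ℝ β β : ℝ) := by
    rw [real_inner_self_eq_norm_mul_norm, real_inner_self_eq_norm_mul_norm]
    nlinarith [hip, hcs, norm_nonneg α, norm_nonneg β]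
  have hprod : (m : ℝ) * n < 4 := by
    rw [← hm, ← hn, hba, div_mul_div_comm, div_lt_iff₀ (by positivity)]
    nlinarith [hsq]
  have hmn : m * n < 4 := by exact_mod_cast hprod
  have hcase : m = 1 ∨ n = 1 := by
    by_contra hc
    push_neg at hc
    have hm2 : 2 ≤ m := by omega
    have hn2 : 2 ≤ n := by omega
    nlinarith
  rcases hcase with h | h
  · have hr := R.reflect α hα β hβ
    rw [hm, h] at hr
    simpa using hr
  · have hr := R.reflect β hβ α hα
    rw [hn, h] at hr
    simp only [Int.cast_one, one_smul] at hr
    have h2' := R.neg_mem' hr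
    simpa [neg_sub] using h2'

private lemma inner_multiset_sum' (γ : V) (M : Multiset V) :
    (inner ℝ γ M.sum : ℝ) = (M.map (fun x => (inner ℝ γ x : ℝ))).sum := by
  induction M using Multiset.induction with
  | empty => simp
  | cons a s ih => simp [inner_add_right, ih]

private lemma sum_map_neg'' (M : Multiset V) : (M.map (fun x => -x)).sum = -M.sum := by
  induction M using Multiset.induction with
  | empty => simp
  | cons a s ih =>
    simp only [Multiset.map_cons, Multiset.sum_cons, ih]
    abel

private lemma msum_nonpos (M : Multiset ℝ) (h : ∀ x ∈ M, x ≤ 0) : M.sum ≤ 0 := by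
  induction M using Multiset.induction with
  | empty => simp
  | cons a s ih =>
    rw [Multiset.sum_cons]
    have h1 := h a (by simp)
    have h2 := ih (fun x hx => h x (by simp [hx]))
    linarith

private lemma msum_pos (M : Multiset ℝ) (h : ∀ x ∈ M, 0 < x) (h0 : M ≠ 0) : 0 < M.sum := by
  induction M using Multiset.induction with
  | empty => exact absurd rfl h0
  | cons a s ih =>
    rw [Multiset.sum_cons]
    have h1 := h a (by simp)
    rcases eq_or_ne s 0 with rfl | hs
    · simpa using h1
    · have h2 := ih (fun x hx => h x (by simp [hx])) hs
      linarith

private lemma msum_neg (M : Multiset ℝ) (h : ∀ x ∈ M, x < 0) (h0 : M ≠ 0) : M.sum < 0 := by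
  have := msum_pos (M.map (fun x => -x)) (by
    intro x hx
    obtain ⟨y, hy, rfl⟩ := Multiset.mem_map.mp hx
    linarith [h y hy]) (by simpa using h0)
  rw [sum_map_neg''] at this
  linarith

/-- Key lemma: a closed set of roots on which `f` is positive contains every root that is a
multiset sum of its elements. -/
private lemma key_pos (P : PosRootSys V) (hcr : P.toRootSys.IsCrystallographic) (C : Set V)
    (hCΦ : C ⊆ P.Φ) (hcl : P.toRootSys.IsClosedSubset C) (hpos : ∀ x ∈ C, 0 < P.f x) :
    ∀ (n : ℕ) (M : Multiset V), Multiset.card M = n → (∀ x ∈ M, x ∈ C) → M.sum ∈ P.Φ →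
      M.sum ∈ C := by
  intro n
  induction n using Nat.strong_induction_on with
  | _ n ih =>
    intro M hcard hmem hsum
    classical
    rcases n with _ | n
    · rw [Multiset.card_eq_zero] at hcard
      subst hcard
      simp only [Multiset.sum_zero] at hsum
      exact absurd rfl (P.nonzero 0 hsum)
    rcases n with _ | k
    · rw [Multiset.card_eq_one] at hcard
      obtain ⟨a, rfl⟩ := hcard
      simpa using hmem a (by simp)
    · set γ := M.sum with hγ
      have hγΦ : γ ∈ P.Φ := hsum
      have hfsum : ∀ (N : Multiset V), (∀ x ∈ N, x ∈ C) → N ≠ 0 → 0 < P.f N.sum := by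
        intro N hN hN0
        rw [map_multiset_sum]
        refine msum_pos _ ?_ (by simpa using hN0)
        intro x hx
        obtain ⟨y, hy, rfl⟩ := Multiset.mem_map.mp hx
        exact hpos y (hN y hy)
      have hex : ∃ β ∈ M, 0 < (inner ℝ γ β : ℝ) := by
        by_contra hc
        push_neg at hc
        have h0 : (0:ℝ) < inner ℝ γ γ := inner_self_pos' (P.nonzero γ hγΦ)
        have hle : (inner ℝ γ γ : ℝ) ≤ 0 := by
          conv_lhs => rw [hγ, inner_multiset_sum']
          refine msum_nonpos _ ?_
          intro x hx
          obtain ⟨y, hy, rfl⟩ := Multiset.mem_map.mp hx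
          exact hc y hy
        linarith
      obtain ⟨β, hβM, hβip⟩ := hex
      have hβC : β ∈ C := hmem β hβM
      have hβΦ : β ∈ P.Φ := hCΦ hβC
      have herase : β ::ₘ M.erase β = M := Multiset.cons_erase hβM
      have heraseC : ∀ x ∈ M.erase β, x ∈ C := fun x hx => hmem x (Multiset.mem_of_mem_erase hx)
      have herasecard : Multiset.card (M.erase β) = k + 1 := by
        have h := congrArg Multiset.card herase
        rw [Multiset.card_cons, hcard] at h
        omega
      have herase0 : M.erase β ≠ 0 := by
        intro h
        rw [h] at herasecard
        simp at herasecard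
      have hesum : (M.erase β).sum = γ - β := by
        have h : β + (M.erase β).sum = γ := by rw [← Multiset.sum_cons, herase, hγ]
        rw [← h]; abel
      have hγne : γ ≠ β := by
        intro h
        have h1 : 0 < P.f (M.erase β).sum := hfsum _ heraseC herase0
        rw [hesum, h, sub_self, map_zero] at h1
        exact lt_irrefl 0 h1
      have hγnne : γ ≠ -β := by
        intro h
        have h1 : 0 < P.f γ := by
          rw [hγ]
          refine hfsum M hmem ?_
          intro h0
          rw [h0] at hcard
          simp at hcard
        have h2 : 0 < P.f β := hpos β hβC
        rw [h, map_neg] at h1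
        linarith
      have hβip' : 0 < (inner ℝ β γ : ℝ) := by rw [real_inner_comm]; exact hβip
      have hsub : γ - β ∈ P.Φ := P.toRootSys.sub_mem' hcr hβΦ hγΦ hβip' hγne hγnne
      have hIH : (M.erase β).sum ∈ C :=
        ih (k+1) (by omega) (M.erase β) herasecard heraseC (by rw [hesum]; exact hsub)
      rw [hesum] at hIH
      have hfin := hcl (γ - β) hIH β hβC (by simpa using hγΦ)
      simpa using hfin

/-- Negated version of the key lemma. -/
private lemma key_neg (P : PosRootSys V) (hcr : P.toRootSys.IsCrystallographic) (C : Set V)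
    (hCΦ : C ⊆ P.Φ) (hcl : P.toRootSys.IsClosedSubset C) (hneg : ∀ x ∈ C, P.f x < 0) :
    ∀ (M : Multiset V), (∀ x ∈ M, x ∈ C) → M.sum ∈ P.Φ → M.sum ∈ C := by
  intro M hM hsum
  set C' : Set V := (fun x => -x) '' C with hC'
  have hC'Φ : C' ⊆ P.Φ := by
    rintro _ ⟨c, hc, rfl⟩
    exact P.toRootSys.neg_mem' (hCΦ hc)
  have hcl' : P.toRootSys.IsClosedSubset C' := by
    rintro _ ⟨c, hc, rfl⟩ _ ⟨d, hd, rfl⟩ hab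
    have h1 : c + d ∈ P.Φ := by
      have h := P.toRootSys.neg_mem' hab
      have he : -((fun x : V => -x) c + (fun x : V => -x) d) = c + d := by
        dsimp only; abel
      rwa [he] at h
    refine ⟨c + d, hcl c hc d hd h1, ?_⟩
    dsimp only; abel
  have hpos' : ∀ x ∈ C', 0 < P.f x := by
    rintro _ ⟨c, hc, rfl⟩
    simp only [map_neg]
    linarith [hneg c hc]
  have hmemb : ∀ x ∈ M.map (fun x => -x), x ∈ C' := by
    intro x hx
    obtain ⟨y, hy, rfl⟩ := Multiset.mem_map.mp hx
    exact ⟨y, hM y hy, rfl⟩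
  have hinΦ : (M.map (fun x => -x)).sum ∈ P.Φ := by
    rw [sum_map_neg'']
    exact P.toRootSys.neg_mem' hsum
  have hkey := key_pos P hcr C' hC'Φ hcl' hpos' (Multiset.card (M.map (fun x => -x)))
    (M.map (fun x => -x)) rfl hmemb hinΦ
  rw [sum_map_neg''] at hkey
  obtain ⟨c, hc, hcs⟩ := hkey
  have : c = M.sum := by
    have := neg_injective hcs
    exact this
  rwa [← this]

private lemma clos_pos_subset (P : PosRootSys V) (T : Set V) (hT : T ⊆ P.Pos) :
    P.toRootSys.clos T ⊆ P.Pos := by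
  rintro γ ⟨hγΦ, M, hM, rfl⟩
  have hM0 : M ≠ 0 := by
    intro h
    rw [h, Multiset.sum_zero] at hγΦ
    exact P.nonzero 0 hγΦ rfl
  refine ⟨hγΦ, ?_⟩
  rw [map_multiset_sum]
  refine msum_pos _ ?_ (by simpa using hM0)
  intro x hx
  obtain ⟨y, hy, rfl⟩ := Multiset.mem_map.mp hx
  exact (hT (hM y hy)).2

private lemma clos_neg_subset (P : PosRootSys V) (T : Set V) (hT : T ⊆ P.Neg) :
    P.toRootSys.clos T ⊆ P.Neg := by
  rintro γ ⟨hγΦ, M, hM, rfl⟩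
  have hM0 : M ≠ 0 := by
    intro h
    rw [h, Multiset.sum_zero] at hγΦ
    exact P.nonzero 0 hγΦ rfl
  refine ⟨hγΦ, ?_⟩
  rw [map_multiset_sum]
  refine msum_neg _ ?_ (by simpa using hM0)
  intro x hx
  obtain ⟨y, hy, rfl⟩ := Multiset.mem_map.mp hx
  exact (hT (hM y hy)).2

private lemma pos_neg_disj (P : PosRootSys V) {α : V} (h1 : α ∈ P.Pos) (h2 : α ∈ P.Neg) :
    False := by
  have := h1.2; have := h2.2; linarith

private lemma clos_closed' (R : RootSys V) (T : Set V) :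
    R.IsClosedSubset (R.clos T) := by
  rintro α ⟨hαΦ, M₁, hM₁, h1⟩ β ⟨hβΦ, M₂, hM₂, h2⟩ hab
  refine ⟨hab, M₁ + M₂, ?_, ?_⟩
  · intro x hx
    rcases Multiset.mem_add.mp hx with h | h
    · exact hM₁ x h
    · exact hM₂ x h
  · rw [Multiset.sum_add, h1, h2]

private lemma mem_clos_self (R : RootSys V) {T : Set V} {α : V} (hα : α ∈ T) (hαΦ : α ∈ R.Φ) :
    α ∈ R.clos T := ⟨hαΦ, {α}, by simp [hα], by simp⟩

end MyAux

theorem stmt10 (P : PosRootSys V) (hcr : P.toRootSys.IsCrystallographic) :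
    (∀ R S : Set V, P.SemiClosed R → P.SemiClosed S →
      P.SemiClosed (P.toRootSys.clos ((R ∪ S) ∩ P.Pos) ∪ ((R ∩ S) ∩ P.Neg)) ∧
      P.wle (P.toRootSys.clos ((R ∪ S) ∩ P.Pos) ∪ ((R ∩ S) ∩ P.Neg)) R ∧
      P.wle (P.toRootSys.clos ((R ∪ S) ∩ P.Pos) ∪ ((R ∩ S) ∩ P.Neg)) S ∧
      (∀ T : Set V, P.SemiClosed T → P.wle T R → P.wle T S →
        P.wle T (P.toRootSys.clos ((R ∪ S) ∩ P.Pos) ∪ ((R ∩ S) ∩ P.Neg)))) ∧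
    (∀ R S : Set V, P.SemiClosed R → P.SemiClosed S →
      P.SemiClosed (((R ∩ S) ∩ P.Pos) ∪ P.toRootSys.clos ((R ∪ S) ∩ P.Neg)) ∧
      P.wle R (((R ∩ S) ∩ P.Pos) ∪ P.toRootSys.clos ((R ∪ S) ∩ P.Neg)) ∧
      P.wle S (((R ∩ S) ∩ P.Pos) ∪ P.toRootSys.clos ((R ∪ S) ∩ P.Neg)) ∧
      (∀ T : Set V, P.SemiClosed T → P.wle R T → P.wle S T →
        P.wle (((R ∩ S) ∩ P.Pos) ∪ P.toRootSys.clos ((R ∪ S) ∩ P.Neg)) T)) := by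
  constructor
  · -- MEET
    intro R S hR hS
    set U : Set V := (R ∪ S) ∩ P.Pos with hU
    set N : Set V := (R ∩ S) ∩ P.Neg with hN
    set Mt : Set V := P.toRootSys.clos U ∪ N with hMt
    have hUpos : U ⊆ P.Pos := Set.inter_subset_right
    have hclosU : P.toRootSys.clos U ⊆ P.Pos := clos_pos_subset P U hUpos
    have hNneg : N ⊆ P.Neg := Set.inter_subset_right
    have hMtPos : Mt ∩ P.Pos = P.toRootSys.clos U := by
      apply Set.Subset.antisymm
      · rintro x ⟨hx, hxp⟩
        rcases hx with h | h
        · exact h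
        · exact absurd hxp (fun hp => pos_neg_disj P hp (hNneg h))
      · intro x hx
        exact ⟨Or.inl hx, hclosU hx⟩
    have hMtNeg : Mt ∩ P.Neg = N := by
      apply Set.Subset.antisymm
      · rintro x ⟨hx, hxn⟩
        rcases hx with h | h
        · exact absurd hxn (fun hn => pos_neg_disj P (hclosU h) hn)
        · exact h
      · intro x hx
        exact ⟨Or.inr hx, hNneg hx⟩
    have hMtΦ : Mt ⊆ P.Φ := by
      rintro x (h | h)
      · exact h.1
      · exact (hNneg h).1
    refine ⟨⟨hMtΦ, ?_, ?_⟩, ?_, ?_, ?_⟩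
    · -- Mt ∩ Pos closed
      rw [hMtPos]
      exact clos_closed' P.toRootSys U
    · -- Mt ∩ Neg closed
      rw [hMtNeg]
      intro α hα β hβ hab
      have habneg : α + β ∈ P.Neg := by
        refine ⟨hab, ?_⟩
        have h1 := (hNneg hα).2
        have h2 := (hNneg hβ).2
        rw [map_add]; linarith
      have hR' := hR.2.2 α ⟨hα.1.1, hNneg hα⟩ β ⟨hβ.1.1, hNneg hβ⟩ hab
      have hS' := hS.2.2 α ⟨hα.1.2, hNneg hα⟩ β ⟨hβ.1.2, hNneg hβ⟩ hab
      exact ⟨⟨hR'.1, hS'.1⟩, habneg⟩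
    · -- wle Mt R
      constructor
      · rintro x ⟨hxR, hxp⟩
        refine ⟨Or.inl (mem_clos_self P.toRootSys ⟨Or.inl hxR, hxp⟩ hxp.1), hxp⟩
      · rintro x ⟨hxM, hxn⟩
        have hxN : x ∈ N := by rw [← hMtNeg]; exact ⟨hxM, hxn⟩
        exact ⟨hxN.1.1, hxn⟩
    · -- wle Mt S
      constructor
      · rintro x ⟨hxS, hxp⟩
        refine ⟨Or.inl (mem_clos_self P.toRootSys ⟨Or.inr hxS, hxp⟩ hxp.1), hxp⟩
      · rintro x ⟨hxM, hxn⟩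
        have hxN : x ∈ N := by rw [← hMtNeg]; exact ⟨hxM, hxn⟩
        exact ⟨hxN.1.2, hxn⟩
    · -- universality
      intro T hT hTR hTS
      constructor
      · -- Mt ∩ Pos ⊆ T ∩ Pos
        rintro x ⟨hxM, hxp⟩
        have hx : x ∈ P.toRootSys.clos U := by rw [← hMtPos]; exact ⟨hxM, hxp⟩
        rcases hx with ⟨hxΦ, M, hM, rfl⟩
        have hsub : U ⊆ T ∩ P.Pos := by
          rintro y ⟨hy, hyp⟩
          rcases hy with h | h
          · exact ⟨(hTR.1 ⟨h, hyp⟩).1, hyp⟩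
          · exact ⟨(hTS.1 ⟨h, hyp⟩).1, hyp⟩
        have hkey := key_pos P hcr (T ∩ P.Pos)
          (fun y hy => (hy.2).1) hT.2.1 (fun y hy => hy.2.2)
          (Multiset.card M) M rfl (fun y hy => hsub (hM y hy)) hxΦ
        exact ⟨hkey.1, hkey.2⟩
      · -- T ∩ Neg ⊆ Mt ∩ Neg
        rintro x hx
        have h1 := hTR.2 hx
        have h2 := hTS.2 hx
        have hxN : x ∈ N := ⟨⟨h1.1, h2.1⟩, hx.2⟩
        exact ⟨Or.inr hxN, hx.2⟩
  · -- JOIN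
    intro R S hR hS
    set U : Set V := (R ∪ S) ∩ P.Neg with hU
    set N : Set V := (R ∩ S) ∩ P.Pos with hN
    set Mt : Set V := N ∪ P.toRootSys.clos U with hMt
    have hUneg : U ⊆ P.Neg := Set.inter_subset_right
    have hclosU : P.toRootSys.clos U ⊆ P.Neg := clos_neg_subset P U hUneg
    have hNpos : N ⊆ P.Pos := Set.inter_subset_right
    have hMtNeg : Mt ∩ P.Neg = P.toRootSys.clos U := by
      apply Set.Subset.antisymm
      · rintro x ⟨hx, hxn⟩
        rcases hx with h | h
        · exact absurd hxn (fun hn => pos_neg_disj P (hNpos h) hn)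
        · exact h
      · intro x hx
        exact ⟨Or.inr hx, hclosU hx⟩
    have hMtPos : Mt ∩ P.Pos = N := by
      apply Set.Subset.antisymm
      · rintro x ⟨hx, hxp⟩
        rcases hx with h | h
        · exact h
        · exact absurd hxp (fun hp => pos_neg_disj P hp (hclosU h))
      · intro x hx
        exact ⟨Or.inl hx, hNpos hx⟩
    have hMtΦ : Mt ⊆ P.Φ := by
      rintro x (h | h)
      · exact (hNpos h).1
      · exact h.1
    refine ⟨⟨hMtΦ, ?_, ?_⟩, ?_, ?_, ?_⟩
    · -- Mt ∩ Pos closed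
      rw [hMtPos]
      intro α hα β hβ hab
      have habpos : α + β ∈ P.Pos := by
        refine ⟨hab, ?_⟩
        have h1 := (hNpos hα).2
        have h2 := (hNpos hβ).2
        rw [map_add]; linarith
      have hR' := hR.2.1 α ⟨hα.1.1, hNpos hα⟩ β ⟨hβ.1.1, hNpos hβ⟩ hab
      have hS' := hS.2.1 α ⟨hα.1.2, hNpos hα⟩ β ⟨hβ.1.2, hNpos hβ⟩ hab
      exact ⟨⟨hR'.1, hS'.1⟩, habpos⟩
    · -- Mt ∩ Neg closed
      rw [hMtNeg]
      exact clos_closed' P.toRootSys U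
    · -- wle R Mt
      constructor
      · rintro x ⟨hxM, hxp⟩
        have hxN : x ∈ N := by rw [← hMtPos]; exact ⟨hxM, hxp⟩
        exact ⟨hxN.1.1, hxp⟩
      · rintro x ⟨hxR, hxn⟩
        refine ⟨Or.inr (mem_clos_self P.toRootSys ⟨Or.inl hxR, hxn⟩ hxn.1), hxn⟩
    · -- wle S Mt
      constructor
      · rintro x ⟨hxM, hxp⟩
        have hxN : x ∈ N := by rw [← hMtPos]; exact ⟨hxM, hxp⟩
        exact ⟨hxN.1.2, hxp⟩
      · rintro x ⟨hxS, hxn⟩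
        refine ⟨Or.inr (mem_clos_self P.toRootSys ⟨Or.inr hxS, hxn⟩ hxn.1), hxn⟩
    · -- universality
      intro T hT hTR hTS
      constructor
      · -- T ∩ Pos ⊆ Mt ∩ Pos
        rintro x hx
        have h1 := hTR.1 hx
        have h2 := hTS.1 hx
        have hxN : x ∈ N := ⟨⟨h1.1, h2.1⟩, hx.2⟩
        exact ⟨Or.inl hxN, hx.2⟩
      · -- Mt ∩ Neg ⊆ T ∩ Neg
        rintro x ⟨hxM, hxn⟩
        have hx : x ∈ P.toRootSys.clos U := by rw [← hMtNeg]; exact ⟨hxM, hxn⟩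
        rcases hx with ⟨hxΦ, M, hM, rfl⟩
        have hsub : U ⊆ T ∩ P.Neg := by
          rintro y ⟨hy, hyn⟩
          rcases hy with h | h
          · exact ⟨(hTR.2 ⟨h, hyn⟩).1, hyn⟩
          · exact ⟨(hTS.2 ⟨h, hyn⟩).1, hyn⟩
        have hkey := key_neg P hcr (T ∩ P.Neg)
          (fun y hy => (hy.2).1) hT.2.2 (fun y hy => hy.2.2)
          M (fun y hy => hsub (hM y hy)) hxΦ
        exact ⟨hkey.1, hkey.2⟩
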